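/- arXiv:2402.00574 — 2 statements merged into one kernel-verified Lean document; each statement's English description precedes it below -/
import Mathlib

section
/- Let X be a complex Banach space and let T be a bounded linear operator on X that is left Fredholm (left invertible modulo the ideal F(X) of finite-rank operators) or right Fredholm (right invertible modulo F(X)). Then null(T) = dim ker(T) and def(T) = dim X/ran(T), where null(T) and def(T) are the nullity and defect of T computed as an element of the Banach algebra B(X). (In particular, if T is left but not right Fredholm then def(T) = dim X/ran(T) = ∞, and if T is right but not left Fredholm then null(T) = dim ker(T) = ∞.) -/
open Filter Topology Set Metric

noncomputable section

namespace Paper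

universe u

section RingDefs

variable {A : Type u} [Ring A]

/-- `J` is a right ideal of `A` (as a set). -/
def IsRightIdeal (J : Set A) : Prop :=
  (0 : A) ∈ J ∧ (∀ a ∈ J, ∀ b ∈ J, a + b ∈ J) ∧ ∀ a ∈ J, ∀ r : A, a * r ∈ J

/-- `J` is a left ideal of `A` (as a set). -/
def IsLeftIdeal (J : Set A) : Prop :=
  (0 : A) ∈ J ∧ (∀ a ∈ J, ∀ b ∈ J, a + b ∈ J) ∧ ∀ a ∈ J, ∀ r : A, r * a ∈ J

/-- `J` is a minimal right ideal of `A`. -/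
def IsMinimalRightIdeal (J : Set A) : Prop :=
  IsRightIdeal J ∧ J ≠ {0} ∧ ∀ K : Set A, IsRightIdeal K → K ⊆ J → K = {0} ∨ K = J

/-- `J` is a minimal left ideal of `A`. -/
def IsMinimalLeftIdeal (J : Set A) : Prop :=
  IsLeftIdeal J ∧ J ≠ {0} ∧ ∀ K : Set A, IsLeftIdeal K → K ⊆ J → K = {0} ∨ K = J

/-- The sum of a finite family of subsets of `A` (as a set of finite sums). -/
def idealSum {k : ℕ} (I : Fin k → Set A) : Set A :=
  {x | ∃ f : Fin k → A, (∀ i, f i ∈ I i) ∧ x = ∑ i, f i}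

/-- The order `Θ(J)` of a right ideal `J`: the least `n` such that `J` is the sum of `n`
minimal right ideals; `Θ({0}) = 0` (empty sum) and `Θ(J) = ∞` if no such `n` exists. -/
def rightOrder (J : Set A) : ℕ∞ :=
  sInf {n : ℕ∞ | ∃ k : ℕ, n = (k : ℕ∞) ∧
    ∃ I : Fin k → Set A, (∀ i, IsMinimalRightIdeal (I i)) ∧ J = idealSum I}

/-- The order `Θ(J)` of a left ideal `J`. -/
def leftOrder (J : Set A) : ℕ∞ :=
  sInf {n : ℕ∞ | ∃ k : ℕ, n = (k : ℕ∞) ∧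
    ∃ I : Fin k → Set A, (∀ i, IsMinimalLeftIdeal (I i)) ∧ J = idealSum I}

/-- The socle of `A`: the sum of all minimal right ideals of `A` (or `{0}` if none). -/
def socle (A : Type u) [Ring A] : Set A :=
  {x | ∃ (k : ℕ) (I : Fin k → Set A), (∀ i, IsMinimalRightIdeal (I i)) ∧ x ∈ idealSum I}

/-- `A` is semiprime: the only two-sided ideal `J` with `J ^ 2 = {0}` is `{0}`. -/
def IsSemiprimeRing (A : Type u) [Ring A] : Prop :=
  ∀ J : Set A, IsLeftIdeal J → IsRightIdeal J → (∀ a ∈ J, ∀ b ∈ J, a * b = 0) → J = {0}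

/-- `A` is semisimple: its Jacobson radical (the intersection of all maximal left ideals)
is zero. -/
def IsSemisimpleRing' (A : Type u) [Ring A] : Prop :=
  sInf {J : Ideal A | J.IsMaximal} = ⊥

/-- `A` is primitive: it has a faithful irreducible representation, i.e. a faithful
simple module. -/
def IsPrimitiveRing (A : Type u) [Ring A] : Prop :=
  ∃ (M : Type u) (_ : AddCommGroup M) (_ : Module A M), IsSimpleModule A M ∧ FaithfulSMul A M

/-- `x` is a Fredholm element of `A`: it is invertible modulo the socle. -/
def IsFredholmElem (x : A) : Prop :=
  ∃ b : A, x * b - 1 ∈ socle A ∧ b * x - 1 ∈ socle A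

/-- `b` is a Drazin inverse of `x` modulo the socle:
in `A/soc(A)`, `bxb = b`, `xb = bx` and `x^k b x = x^k` for some `k`. -/
def IsDrazinInvModSocle (x b : A) : Prop :=
  b * x * b - b ∈ socle A ∧ x * b - b * x ∈ socle A ∧
    ∃ k : ℕ, x ^ k * b * x - x ^ k ∈ socle A

/-- `x` is a B-Fredholm element of `A`: its class in `A/soc(A)` is Drazin invertible. -/
def IsBFredholmElem (x : A) : Prop := ∃ b : A, IsDrazinInvModSocle x b

/-- `x` is Drazin invertible in `A`. -/
def IsDrazinInvertible (x : A) : Prop :=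
  ∃ (b : A) (k : ℕ), b * x * b = b ∧ x * b = b * x ∧ x ^ k * b * x = x ^ k

/-- The nullity of `x`: the order of the right annihilator `R(x)` of `x`. -/
def nullity (x : A) : ℕ∞ := rightOrder {a : A | x * a = 0}

/-- The defect of `x`: the order of the left annihilator `L(x)` of `x`. -/
def defect (x : A) : ℕ∞ := leftOrder {a : A | a * x = 0}

/-- The ascent `p_l(x)` of the left multiplication operator `L_x`. -/
def lAscent (x : A) : ℕ∞ :=
  sInf {n : ℕ∞ | ∃ k : ℕ, n = (k : ℕ∞) ∧
    {a : A | x ^ k * a = 0} = {a : A | x ^ (k + 1) * a = 0}}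

/-- The descent `q_l(x)` of the left multiplication operator `L_x`. -/
def lDescent (x : A) : ℕ∞ :=
  sInf {n : ℕ∞ | ∃ k : ℕ, n = (k : ℕ∞) ∧
    (Set.range fun a : A => x ^ k * a) = Set.range fun a : A => x ^ (k + 1) * a}

/-- The ascent `p_r(x)` of the right multiplication operator `R_x`. -/
def rAscent (x : A) : ℕ∞ :=
  sInf {n : ℕ∞ | ∃ k : ℕ, n = (k : ℕ∞) ∧
    {a : A | a * x ^ k = 0} = {a : A | a * x ^ (k + 1) = 0}}

/-- The descent `q_r(x)` of the right multiplication operator `R_x`. -/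
def rDescent (x : A) : ℕ∞ :=
  sInf {n : ℕ∞ | ∃ k : ℕ, n = (k : ℕ∞) ∧
    (Set.range fun a : A => a * x ^ k) = Set.range fun a : A => a * x ^ (k + 1)}

end RingDefs

section BanachDefs

variable {A : Type u} [NormedRing A] [NormedAlgebra ℂ A] [CompleteSpace A]

/-- The B-Fredholm spectrum of `x`. -/
def sigmaBF (x : A) : Set ℂ := {l : ℂ | ¬ IsBFredholmElem (x - l • (1 : A))}

/-- The B-Fredholm resolvent set of `x`. -/
def rhoBF (x : A) : Set ℂ := (sigmaBF x)ᶜ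

/-- The left spectrum of `x`: those `λ` for which `x - λ` is not left invertible. -/
def leftSpectrum (x : A) : Set ℂ := {l : ℂ | ¬ ∃ b : A, b * (x - l • (1 : A)) = 1}

/-- The right spectrum of `x`: those `λ` for which `x - λ` is not right invertible. -/
def rightSpectrum (x : A) : Set ℂ := {l : ℂ | ¬ ∃ b : A, (x - l • (1 : A)) * b = 1}

/-- The resolvent function of `x` (equal to `0` on the spectrum). -/
def resolventFn (x : A) (μ : ℂ) : A := Ring.inverse (algebraMap ℂ A μ - x)

/-- `l` is a pole of the resolvent of `x`: `l` is an isolated point of the spectrum and the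
resolvent has a pole (of some finite order `n ≥ 1`) at `l`. -/
def IsPoleOfResolvent (x : A) (l : ℂ) : Prop :=
  l ∈ spectrum ℂ x ∧ (∀ᶠ μ in 𝓝[≠] l, μ ∉ spectrum ℂ x) ∧
    ∃ n : ℕ, 1 ≤ n ∧ ∃ c : A, c ≠ 0 ∧
      Tendsto (fun μ : ℂ => (μ - l) ^ n • resolventFn x μ) (𝓝[≠] l) (𝓝 c)

/-- The set `Π(x)` of poles of the resolvent of `x`. -/
def polesSet (x : A) : Set ℂ := {l : ℂ | IsPoleOfResolvent x l}

/-- `x` has the left single-valued extension property at `l`. -/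
def HasLeftSVEPAt (x : A) (l : ℂ) : Prop :=
  ∀ U : Set ℂ, IsOpen U → l ∈ U → ∀ f : ℂ → A, DifferentiableOn ℂ f U →
    (∀ μ ∈ U, (μ • (1 : A) - x) * f μ = 0) → ∀ μ ∈ U, f μ = 0

/-- `x` has the right single-valued extension property at `l`. -/
def HasRightSVEPAt (x : A) (l : ℂ) : Prop :=
  ∀ U : Set ℂ, IsOpen U → l ∈ U → ∀ f : ℂ → A, DifferentiableOn ℂ f U →
    (∀ μ ∈ U, f μ * (μ • (1 : A) - x) = 0) → ∀ μ ∈ U, f μ = 0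

/-- The left quasinilpotent part `H_l(x)` of `x`. -/
def Hl (x : A) : Set A :=
  {a : A | Tendsto (fun n : ℕ => ‖x ^ n * a‖ ^ ((1 : ℝ) / (n : ℝ))) atTop (𝓝 0)}

/-- The right quasinilpotent part `H_r(x)` of `x`. -/
def Hr (x : A) : Set A :=
  {a : A | Tendsto (fun n : ℕ => ‖a * x ^ n‖ ^ ((1 : ℝ) / (n : ℝ))) atTop (𝓝 0)}

/-- The left analytic core `K_l(x)` of `x` (here `u n` plays the role of `a_{n+1}`). -/
def Kl (x : A) : Set A :=
  {a : A | ∃ (u : ℕ → A) (δ : ℝ), 0 < δ ∧ x * u 0 = a ∧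
    (∀ n : ℕ, x * u (n + 1) = u n) ∧ ∀ n : ℕ, ‖u n‖ ≤ δ ^ (n + 1) * ‖a‖}

/-- The right analytic core `K_r(x)` of `x`. -/
def Kr (x : A) : Set A :=
  {a : A | ∃ (u : ℕ → A) (δ : ℝ), 0 < δ ∧ u 0 * x = a ∧
    (∀ n : ℕ, u (n + 1) * x = u n) ∧ ∀ n : ℕ, ‖u n‖ ≤ δ ^ (n + 1) * ‖a‖}

/-- `a` is a left topological divisor of zero. -/
def IsLeftTDZ (a : A) : Prop :=
  ∃ u : ℕ → A, (∀ n, ‖u n‖ = 1) ∧ Tendsto (fun n => a * u n) atTop (𝓝 0)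

/-- `a` is a right topological divisor of zero. -/
def IsRightTDZ (a : A) : Prop :=
  ∃ u : ℕ → A, (∀ n, ‖u n‖ = 1) ∧ Tendsto (fun n => u n * a) atTop (𝓝 0)

/-- `x` is a Riesz element: its image in `A/cl(soc(A))` is quasinilpotent, i.e. `x - λ` is
invertible modulo the closure of the socle for every `λ ≠ 0`. -/
def IsRieszElem (x : A) : Prop :=
  ∀ l : ℂ, l ≠ 0 → ∃ b : A,
    (x - l • (1 : A)) * b - 1 ∈ closure (socle A) ∧
    b * (x - l • (1 : A)) - 1 ∈ closure (socle A)

/-- The rank of an element `a` (Aupetit–Mouton): `sup_{x ∈ A} #(σ(xa) \ {0})`. -/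
def elemRank (a : A) : ℕ∞ := ⨆ x : A, (spectrum ℂ (x * a) \ {0}).encard

open Classical in
/-- An auxiliary radius for the Riesz projection at an isolated spectral point. -/
def rieszRadius (a : A) (l : ℂ) : ℝ :=
  if (spectrum ℂ a \ {l}).Nonempty then infDist l (spectrum ℂ a \ {l}) / 2 else 1

/-- The Riesz (spectral) projection of `a` associated with `l`. -/
def rieszProjection (a : A) (l : ℂ) : A :=
  (2 * (Real.pi : ℂ) * Complex.I)⁻¹ •
    circleIntegral (fun μ : ℂ => resolventFn a μ) l (rieszRadius a l)

/-- The algebraic multiplicity `m(l, a)`: the rank of the Riesz projection of `a` at `l`. -/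
def algMult (a : A) (l : ℂ) : ℕ∞ := elemRank (rieszProjection a l)

/-- The trace `τ(a) = ∑_{λ ∈ σ(a)} λ · m(λ, a)` (Aupetit–Mouton), for `a ∈ soc(A)`. -/
def socTrace (a : A) : ℂ := ∑ᶠ l ∈ spectrum ℂ a, l * ((algMult a l).toNat : ℂ)

open Classical in
/-- The index of a B-Fredholm element `a`: `i(a) = τ(a a₀ - a₀ a)` where `π(a₀)` is a Drazin
inverse of `π(a)` (this is independent of the choice of `a₀`). -/
def bfIndex (a : A) : ℂ :=
  if h : ∃ b : A, IsDrazinInvModSocle a b then socTrace (a * h.choose - h.choose * a) else 0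

/-- `a` is B-Weyl: B-Fredholm of index zero. -/
def IsBWeylElem (a : A) : Prop := IsBFredholmElem a ∧ bfIndex a = 0

/-- The B-Weyl spectrum of `a`. -/
def sigmaBW (a : A) : Set ℂ := {l : ℂ | ¬ IsBWeylElem (a - l • (1 : A))}

end BanachDefs

end Paper



namespace StatementZeroAux

open Paper ContinuousLinearMap

variable {X : Type*} [NormedAddCommGroup X] [NormedSpace ℂ X]

/-- Operators with range inside the line spanned by `y`. -/
def Jr (y : X) : Set (X →L[ℂ] X) := {a | ∀ v, ∃ c : ℂ, a v = c • y}

/-- Operators of the form `f ⊗ y` for a fixed functional `f`. -/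
def Kf (f : X →L[ℂ] ℂ) : Set (X →L[ℂ] X) := {a | ∃ y : X, a = f.smulRight y}

lemma smulRight_mem_Jr (f : X →L[ℂ] ℂ) (y : X) : f.smulRight y ∈ Jr y :=
  fun v => ⟨f v, rfl⟩

lemma Jr_rightIdeal (y : X) : IsRightIdeal (Jr y) := by
  refine ⟨fun v => ⟨0, by simp⟩, fun a ha b hb v => ?_, fun a ha r v => ha (r v)⟩
  obtain ⟨c, hc⟩ := ha v
  obtain ⟨d, hd⟩ := hb v
  exact ⟨c + d, by simp [hc, hd, add_smul]⟩

lemma Jr_repr {y : X} (hy : y ≠ 0) {b : X →L[ℂ] X} (hb : b ∈ Jr y) :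
    ∃ g : X →L[ℂ] ℂ, b = g.smulRight y := by
  obtain ⟨f₀, hf₀⟩ := SeparatingDual.exists_eq_one (R := ℂ) hy
  refine ⟨f₀.comp b, ?_⟩
  ext v
  obtain ⟨c, hc⟩ := hb v
  simp [hc, hf₀, smul_smul]

lemma exists_ne_zero_of_ne_singleton {K : Set (X →L[ℂ] X)} (h0 : (0 : X →L[ℂ] X) ∈ K)
    (h : K ≠ {0}) : ∃ a ∈ K, a ≠ 0 := by
  by_contra hc
  push_neg at hc
  exact h (Set.eq_singleton_iff_unique_mem.2 ⟨h0, fun a ha => hc a ha⟩)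

lemma Jr_minimal {y : X} (hy : y ≠ 0) : IsMinimalRightIdeal (Jr y) := by
  refine ⟨Jr_rightIdeal y, ?_, ?_⟩
  · intro h
    obtain ⟨f, hf⟩ := SeparatingDual.exists_eq_one (R := ℂ) hy
    have hmem : f.smulRight y ∈ Jr y := smulRight_mem_Jr f y
    rw [h, Set.mem_singleton_iff] at hmem
    have : (f.smulRight y) y = 0 := by rw [hmem]; rfl
    simp [hf] at this
    exact hy this
  · intro K hK hKsub
    by_cases h0 : K = {0}
    · exact Or.inl h0
    right
    obtain ⟨a, haK, ha0⟩ := exists_ne_zero_of_ne_singleton hK.1 h0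
    obtain ⟨v₀, hv₀⟩ : ∃ v₀, a v₀ ≠ 0 := by
      by_contra hc
      push_neg at hc
      exact ha0 (ContinuousLinearMap.ext fun v => by simp [hc])
    obtain ⟨c₀, hc₀⟩ := hKsub haK v₀
    have hc₀0 : c₀ ≠ 0 := by rintro rfl; rw [hc₀] at hv₀; simp at hv₀
    apply Set.Subset.antisymm hKsub
    intro b hb
    obtain ⟨g, rfl⟩ := Jr_repr hy hb
    have : g.smulRight y = a * ((c₀⁻¹ • g).smulRight v₀) := by
      ext v
      simp only [ContinuousLinearMap.mul_apply, ContinuousLinearMap.smulRight_apply,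
        ContinuousLinearMap.smul_apply, smul_smul, map_smul, hc₀]
      congr 1
      rw [smul_eq_mul]
      field_simp
    rw [this]
    exact hK.2.2 a haK _

lemma Jr_inter_rightIdeal {y : X} {K : Set (X →L[ℂ] X)} (hK : IsRightIdeal K) :
    IsRightIdeal (K ∩ Jr y) := by
  refine ⟨⟨hK.1, (Jr_rightIdeal y).1⟩, fun a ha b hb => ⟨hK.2.1 a ha.1 b hb.1,
    (Jr_rightIdeal y).2.1 a ha.2 b hb.2⟩, fun a ha r => ⟨hK.2.2 a ha.1 r,
    (Jr_rightIdeal y).2.2 a ha.2 r⟩⟩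

lemma minimalRightIdeal_classify {J : Set (X →L[ℂ] X)} (hJ : IsMinimalRightIdeal J) :
    ∃ y : X, y ≠ 0 ∧ J = Jr y := by
  obtain ⟨a, haJ, ha0⟩ := exists_ne_zero_of_ne_singleton hJ.1.1 hJ.2.1
  obtain ⟨v₀, hv₀⟩ : ∃ v₀, a v₀ ≠ 0 := by
    by_contra hc
    push_neg at hc
    exact ha0 (ContinuousLinearMap.ext fun v => by simp [hc])
  set y := a v₀ with hy
  refine ⟨y, hv₀, ?_⟩
  obtain ⟨f, hf⟩ := SeparatingDual.exists_eq_one (R := ℂ) hv₀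
  set e := a * (f.smulRight v₀) with he
  have heJr : e ∈ Jr y := by
    intro v
    exact ⟨f v, by simp [he, smul_smul, hy]⟩
  have heJ : e ∈ J := hJ.1.2.2 a haJ _
  have he0 : e ≠ 0 := by
    intro h
    have : e y = 0 := by rw [h]; rfl
    rw [he] at this
    simp only [ContinuousLinearMap.mul_apply, ContinuousLinearMap.smulRight_apply, hf,
      one_smul] at this
    exact hv₀ this
  have hint : IsRightIdeal (J ∩ Jr y) := Jr_inter_rightIdeal hJ.1
  have hne : J ∩ Jr y ≠ {0} := by
    intro h
    have : e ∈ ({0} : Set (X →L[ℂ] X)) := h ▸ ⟨heJ, heJr⟩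
    exact he0 this
  have h1 := hJ.2.2 _ hint Set.inter_subset_left
  have h2 := (Jr_minimal hv₀).2.2 _ hint Set.inter_subset_right
  rcases h1 with h1 | h1
  · exact absurd h1 hne
  rcases h2 with h2 | h2
  · exact absurd h2 hne
  rw [← h1, h2]

end StatementZeroAux
namespace StatementZeroAux

open Paper

variable {X : Type*} [NormedAddCommGroup X] [NormedSpace ℂ X]

lemma Kf_leftIdeal (f : X →L[ℂ] ℂ) : IsLeftIdeal (Kf f) := by
  refine ⟨⟨0, by ext v; simp⟩, ?_, ?_⟩
  · rintro a ⟨y, rfl⟩ b ⟨z, rfl⟩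
    exact ⟨y + z, by ext v; simp⟩
  · rintro a ⟨y, rfl⟩ r
    exact ⟨r y, by ext v; simp⟩

lemma Kf_minimal {f : X →L[ℂ] ℂ} (hf : f ≠ 0) : IsMinimalLeftIdeal (Kf f) := by
  obtain ⟨w, hw⟩ : ∃ w, f w ≠ 0 := by
    by_contra hc
    push_neg at hc
    exact hf (ContinuousLinearMap.ext fun v => by simp [hc])
  have hw0 : w ≠ 0 := by rintro rfl; simp at hw
  refine ⟨Kf_leftIdeal f, ?_, ?_⟩
  · intro h
    have hmem : f.smulRight w ∈ Kf f := ⟨w, rfl⟩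
    rw [h, Set.mem_singleton_iff] at hmem
    have : (f.smulRight w) w = 0 := by rw [hmem]; rfl
    simp only [ContinuousLinearMap.smulRight_apply] at this
    exact hw (by simpa [hw0] using smul_eq_zero.1 this)
  · intro K hK hKsub
    by_cases h0 : K = {0}
    · exact Or.inl h0
    right
    obtain ⟨a, haK, ha0⟩ := exists_ne_zero_of_ne_singleton hK.1 h0
    obtain ⟨y, rfl⟩ := hKsub haK
    have hy0 : y ≠ 0 := by rintro rfl; exact ha0 (by ext v; simp)
    obtain ⟨g, hg⟩ := SeparatingDual.exists_eq_one (R := ℂ) hy0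
    apply Set.Subset.antisymm hKsub
    rintro b ⟨z, rfl⟩
    have : f.smulRight z = (g.smulRight z) * (f.smulRight y) := by
      ext v
      simp [smul_smul, hg]
    rw [this]
    exact hK.2.2 _ haK _

lemma Kf_inter_leftIdeal {f : X →L[ℂ] ℂ} {K : Set (X →L[ℂ] X)} (hK : IsLeftIdeal K) :
    IsLeftIdeal (K ∩ Kf f) :=
  ⟨⟨hK.1, (Kf_leftIdeal f).1⟩, fun a ha b hb => ⟨hK.2.1 a ha.1 b hb.1,
    (Kf_leftIdeal f).2.1 a ha.2 b hb.2⟩, fun a ha r => ⟨hK.2.2 a ha.1 r,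
    (Kf_leftIdeal f).2.2 a ha.2 r⟩⟩

lemma minimalLeftIdeal_classify {J : Set (X →L[ℂ] X)} (hJ : IsMinimalLeftIdeal J) :
    ∃ f : X →L[ℂ] ℂ, f ≠ 0 ∧ J = Kf f := by
  obtain ⟨a, haJ, ha0⟩ := exists_ne_zero_of_ne_singleton hJ.1.1 hJ.2.1
  obtain ⟨v₀, hv₀⟩ : ∃ v₀, a v₀ ≠ 0 := by
    by_contra hc
    push_neg at hc
    exact ha0 (ContinuousLinearMap.ext fun v => by simp [hc])
  obtain ⟨g, hg⟩ := SeparatingDual.exists_eq_one (R := ℂ) hv₀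
  set f := g.comp a with hfdef
  have hf0 : f ≠ 0 := by
    intro h
    have : f v₀ = 0 := by rw [h]; rfl
    simp [hfdef, hg] at this
  set e := (g.smulRight (a v₀)) * a with he
  have heKf : e ∈ Kf f := ⟨a v₀, by ext v; simp [he, hfdef]⟩
  have heJ : e ∈ J := hJ.1.2.2 a haJ _
  have he0 : e ≠ 0 := by
    intro h
    have : e v₀ = 0 := by rw [h]; rfl
    rw [he] at this
    simp only [ContinuousLinearMap.mul_apply, ContinuousLinearMap.smulRight_apply, hg,
      one_smul] at this
    exact hv₀ this
  have hint : IsLeftIdeal (J ∩ Kf f) := Kf_inter_leftIdeal hJ.1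
  have hne : J ∩ Kf f ≠ {0} := by
    intro h
    exact he0 (h ▸ ⟨heJ, heKf⟩ : e ∈ ({0} : Set (X →L[ℂ] X)))
  have h1 := hJ.2.2 _ hint Set.inter_subset_left
  have h2 := (Kf_minimal hf0).2.2 _ hint Set.inter_subset_right
  rcases h1 with h1 | h1
  · exact absurd h1 hne
  rcases h2 with h2 | h2
  · exact absurd h2 hne
  exact ⟨f, hf0, by rw [← h1, h2]⟩

/-- Membership of each summand in an `idealSum`. -/
lemma mem_idealSum_of_mem {k : ℕ} {I : Fin k → Set (X →L[ℂ] X)}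
    (h0 : ∀ j, (0 : X →L[ℂ] X) ∈ I j) {i : Fin k} {x : X →L[ℂ] X} (hx : x ∈ I i) :
    x ∈ idealSum I := by
  refine ⟨Pi.single i x, fun j => ?_, by simp⟩
  rcases eq_or_ne j i with rfl | hj
  · simpa using hx
  · simpa [Pi.single_apply, hj] using h0 j

end StatementZeroAux
set_option linter.unusedSectionVars false

namespace StatementZeroAux

open Paper

variable {X : Type*} [NormedAddCommGroup X] [NormedSpace ℂ X] [CompleteSpace X]

lemma ker_le_span_of_decomp (T : X →L[ℂ] X) {k : ℕ} {y : Fin k → X}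
    (hsum : {a : X →L[ℂ] X | T * a = 0} = idealSum fun i => Jr (y i)) :
    LinearMap.ker (T : X →ₗ[ℂ] X) ≤ Submodule.span ℂ (Set.range y) := by
  intro z hz
  rcases eq_or_ne z 0 with rfl | hz0
  · exact Submodule.zero_mem _
  obtain ⟨f, hf⟩ := SeparatingDual.exists_eq_one (R := ℂ) hz0
  have hTz : T z = 0 := hz
  have hmem : f.smulRight z ∈ {a : X →L[ℂ] X | T * a = 0} := by
    show T * f.smulRight z = 0
    ext v
    simp [hTz]
  rw [hsum] at hmem
  obtain ⟨b, hb, hbsum⟩ := hmem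
  have hz' : z = (∑ i, b i) z := by
    have := congrArg (fun a : X →L[ℂ] X => a z) hbsum
    simpa [hf] using this
  rw [ContinuousLinearMap.sum_apply] at hz'
  choose c hc using fun i => hb i z
  rw [hz']
  apply Submodule.sum_mem
  intro i _
  rw [hc i]
  exact Submodule.smul_mem _ _ (Submodule.subset_span ⟨i, rfl⟩)

lemma exists_decomp_nullity (T : X →L[ℂ] X) [FiniteDimensional ℂ (LinearMap.ker (T : X →ₗ[ℂ] X))] :
    ∃ I : Fin (Module.finrank ℂ (LinearMap.ker (T : X →ₗ[ℂ] X))) → Set (X →L[ℂ] X),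
      (∀ i, IsMinimalRightIdeal (I i)) ∧ {a : X →L[ℂ] X | T * a = 0} = idealSum I := by
  classical
  set n := Module.finrank ℂ (LinearMap.ker (T : X →ₗ[ℂ] X)) with hn
  let b : Module.Basis (Fin n) ℂ (LinearMap.ker (T : X →ₗ[ℂ] X)) := Module.finBasis ℂ _
  have hbne : ∀ i, ((b i : X) : X) ≠ 0 := fun i => by
    simpa [Submodule.coe_eq_zero] using b.ne_zero i
  refine ⟨fun i => Jr ((b i : X)), fun i => Jr_minimal (hbne i), ?_⟩
  ext a
  constructor
  · intro ha
    have hmem : ∀ x, a x ∈ LinearMap.ker (T : X →ₗ[ℂ] X) := fun x => by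
      have := congrArg (fun s : X →L[ℂ] X => s x) ha
      simpa using this
    set a' : X →L[ℂ] (LinearMap.ker (T : X →ₗ[ℂ] X)) := a.codRestrict _ hmem with ha'
    refine ⟨fun i => ((LinearMap.toContinuousLinearMap (b.coord i)).comp a').smulRight (b i : X),
      fun i => smulRight_mem_Jr _ _, ?_⟩
    ext x
    rw [ContinuousLinearMap.sum_apply]
    simp only [ContinuousLinearMap.smulRight_apply, ContinuousLinearMap.comp_apply,
      LinearMap.coe_toContinuousLinearMap', Module.Basis.coord_apply]
    have h1 : a x = ((a' x : LinearMap.ker (T : X →ₗ[ℂ] X)) : X) := rfl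
    conv_lhs => rw [h1, ← b.sum_repr (a' x)]
    push_cast
    rfl
  · rintro ⟨f, hfI, rfl⟩
    show T * ∑ i, f i = 0
    ext x
    have : ∀ i, T ((f i) x) = 0 := by
      intro i
      obtain ⟨c, hc⟩ := hfI i x
      rw [hc, map_smul]
      have : (b i : X) ∈ LinearMap.ker (T : X →ₗ[ℂ] X) := (b i).2
      rw [show T (b i : X) = 0 from LinearMap.mem_ker.1 this, smul_zero]
    simp [ContinuousLinearMap.sum_apply, this]

end StatementZeroAux
namespace StatementZeroAux

open Paper

variable {X : Type*} [NormedAddCommGroup X] [NormedSpace ℂ X] [CompleteSpace X]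

lemma nullity_eq (T : X →L[ℂ] X) :
    nullity T = Cardinal.toENat (Module.rank ℂ (LinearMap.ker (T : X →ₗ[ℂ] X))) := by
  classical
  have key : ∀ n ∈ {n : ℕ∞ | ∃ k : ℕ, n = (k : ℕ∞) ∧ ∃ I : Fin k → Set (X →L[ℂ] X),
      (∀ i, IsMinimalRightIdeal (I i)) ∧ {a : X →L[ℂ] X | T * a = 0} = idealSum I},
      ∃ k : ℕ, n = (k : ℕ∞) ∧ Module.rank ℂ (LinearMap.ker (T : X →ₗ[ℂ] X)) ≤ k ∧
        FiniteDimensional ℂ (LinearMap.ker (T : X →ₗ[ℂ] X)) := by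
    rintro n ⟨k, rfl, I, hmin, hsum⟩
    choose y hy0 hI using fun i => minimalRightIdeal_classify (hmin i)
    have hsum' : {a : X →L[ℂ] X | T * a = 0} = idealSum fun i => Jr (y i) := by
      rw [hsum, funext hI]
    have hle := ker_le_span_of_decomp T hsum'
    haveI : FiniteDimensional ℂ (Submodule.span ℂ (Set.range y)) :=
      FiniteDimensional.span_of_finite ℂ (Set.finite_range y)
    refine ⟨k, rfl, ?_, Submodule.finiteDimensional_of_le hle⟩
    calc Module.rank ℂ (LinearMap.ker (T : X →ₗ[ℂ] X))
        ≤ Module.rank ℂ (Submodule.span ℂ (Set.range y)) := Submodule.rank_mono hle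
      _ ≤ Cardinal.mk (Set.range y) := rank_span_le _
      _ ≤ k := by simpa using Cardinal.mk_range_le_lift (f := y)
  show rightOrder _ = _
  unfold rightOrder
  apply le_antisymm
  · by_cases hfin : FiniteDimensional ℂ (LinearMap.ker (T : X →ₗ[ℂ] X))
    · obtain ⟨I, hmin, hsum⟩ := exists_decomp_nullity T
      have hmem : ((Module.finrank ℂ (LinearMap.ker (T : X →ₗ[ℂ] X)) : ℕ) : ℕ∞) ∈
          {n : ℕ∞ | ∃ k : ℕ, n = (k : ℕ∞) ∧ ∃ I : Fin k → Set (X →L[ℂ] X),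
            (∀ i, IsMinimalRightIdeal (I i)) ∧ {a : X →L[ℂ] X | T * a = 0} = idealSum I} :=
        ⟨_, rfl, I, hmin, hsum⟩
      have h2 : Cardinal.toENat (Module.rank ℂ (LinearMap.ker (T : X →ₗ[ℂ] X))) =
          ((Module.finrank ℂ (LinearMap.ker (T : X →ₗ[ℂ] X)) : ℕ) : ℕ∞) := by
        rw [← Module.finrank_eq_rank ℂ, Cardinal.toENat_nat]
      rw [h2]
      exact sInf_le hmem
    · have hempty : {n : ℕ∞ | ∃ k : ℕ, n = (k : ℕ∞) ∧ ∃ I : Fin k → Set (X →L[ℂ] X),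
          (∀ i, IsMinimalRightIdeal (I i)) ∧ {a : X →L[ℂ] X | T * a = 0} = idealSum I} = ∅ := by
        rw [Set.eq_empty_iff_forall_notMem]
        intro n hn
        obtain ⟨k, _, _, hfd⟩ := key n hn
        exact hfin hfd
      have htop : Cardinal.aleph0 ≤ Module.rank ℂ (LinearMap.ker (T : X →ₗ[ℂ] X)) := by
        by_contra h
        push_neg at h
        obtain ⟨m, hm⟩ := Cardinal.lt_aleph0.1 h
        exact hfin (Module.finite_of_rank_eq_nat hm)
      rw [hempty, sInf_empty, Cardinal.toENat_eq_top.2 htop]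
  · apply le_sInf
    intro n hn
    obtain ⟨k, rfl, hrank, _⟩ := key n hn
    exact_mod_cast Cardinal.toENat_le_nat.2 hrank

end StatementZeroAux
namespace StatementZeroAux

open Paper

variable {X : Type*} [NormedAddCommGroup X] [NormedSpace ℂ X] [CompleteSpace X]

/-- The quotient map as a continuous linear map (quotient by a submodule of a normed space). -/
def mkQL (N : Submodule ℂ X) : X →L[ℂ] (X ⧸ N) :=
  { N.mkQ with cont := continuous_quot_mk }

@[simp] lemma mkQL_apply (N : Submodule ℂ X) (x : X) :
    mkQL N x = Submodule.Quotient.mk x := rfl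

lemma defect_key (T : X →L[ℂ] X) (hN : IsClosed ((LinearMap.range (T : X →ₗ[ℂ] X) : Submodule ℂ X) : Set X))
    {k : ℕ} {f : Fin k → (X →L[ℂ] ℂ)} (hf0 : ∀ i, f i ≠ 0)
    (hsum : {a : X →L[ℂ] X | a * T = 0} = idealSum fun i => Kf (f i)) :
    Module.rank ℂ (X ⧸ LinearMap.range (T : X →ₗ[ℂ] X)) ≤ k := by
  classical
  haveI : IsClosed ((LinearMap.range (T : X →ₗ[ℂ] X) : Submodule ℂ X) : Set X) := hN
  set N : Submodule ℂ X := LinearMap.range (T : X →ₗ[ℂ] X) with hNdef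
  -- each `f i` kills the range of `T`
  have hform : ∀ i, ∀ x, f i (T x) = 0 := by
    intro i x
    obtain ⟨w, hw⟩ : ∃ w, f i w ≠ 0 := by
      by_contra hc
      push_neg at hc
      exact hf0 i (ContinuousLinearMap.ext fun v => by simp [hc])
    have hw0 : w ≠ 0 := by rintro rfl; simp at hw
    have hmem : (f i).smulRight w ∈ {a : X →L[ℂ] X | a * T = 0} := by
      rw [hsum]
      exact mem_idealSum_of_mem (fun j => (Kf_leftIdeal (f j)).1) ⟨w, rfl⟩
    have := congrArg (fun s : X →L[ℂ] X => s x) hmem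
    simp only [ContinuousLinearMap.mul_apply, ContinuousLinearMap.smulRight_apply,
      ContinuousLinearMap.zero_apply] at this
    exact (smul_eq_zero.1 this).resolve_right hw0
  -- the functional map into `ℂ^k`
  set φ : X →ₗ[ℂ] (Fin k → ℂ) := LinearMap.pi (fun i => (f i : X →ₗ[ℂ] ℂ)) with hφ
  have hNker : N ≤ LinearMap.ker φ := by
    rintro _ ⟨x, rfl⟩
    ext i
    exact hform i x
  have hkerN : LinearMap.ker φ ≤ N := by
    intro z hz
    have hz' : ∀ i, f i z = 0 := fun i => congrFun (LinearMap.mem_ker.1 hz) i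
    by_contra hzN
    have hzbar : (Submodule.Quotient.mk z : X ⧸ N) ≠ 0 := by
      simpa [Submodule.Quotient.mk_eq_zero] using hzN
    obtain ⟨φ₀, hφ₀⟩ := SeparatingDual.exists_eq_one (R := ℂ) hzbar
    set g : X →L[ℂ] ℂ := φ₀.comp (mkQL N) with hg
    have hgz : g z = 1 := by simp [hg, hφ₀]
    have hgT : ∀ x, g (T x) = 0 := by
      intro x
      have : (Submodule.Quotient.mk (T x) : X ⧸ N) = 0 :=
        (Submodule.Quotient.mk_eq_zero _).2 ⟨x, rfl⟩
      simp [hg, this]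
    have hmem : g.smulRight z ∈ {a : X →L[ℂ] X | a * T = 0} := by
      show (g.smulRight z) * T = 0
      ext x
      simp [hgT x]
    rw [hsum] at hmem
    obtain ⟨b, hb, hbsum⟩ := hmem
    have hz2 : z = (∑ i, b i) z := by
      have := congrArg (fun s : X →L[ℂ] X => s z) hbsum
      simpa [hgz] using this
    rw [ContinuousLinearMap.sum_apply] at hz2
    have : z = 0 := by
      rw [hz2]
      apply Finset.sum_eq_zero
      intro i _
      obtain ⟨y, hy⟩ := hb i
      rw [hy]
      simp [hz' i]
    exact hzN (this ▸ N.zero_mem)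
  set φbar := N.liftQ φ hNker with hφbar
  have hinj : Function.Injective φbar := by
    rw [← LinearMap.ker_eq_bot]
    exact Submodule.ker_liftQ_eq_bot _ _ _ hkerN
  have := LinearMap.lift_rank_le_of_injective φbar hinj
  rw [rank_fun'] at this
  simpa using this

lemma exists_decomp_defect (T : X →L[ℂ] X)
    (hN : IsClosed ((LinearMap.range (T : X →ₗ[ℂ] X) : Submodule ℂ X) : Set X))
    [FiniteDimensional ℂ (X ⧸ LinearMap.range (T : X →ₗ[ℂ] X))] :
    ∃ f : Fin (Module.finrank ℂ (X ⧸ LinearMap.range (T : X →ₗ[ℂ] X))) → (X →L[ℂ] ℂ),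
      (∀ i, f i ≠ 0) ∧ {a : X →L[ℂ] X | a * T = 0} = idealSum fun i => Kf (f i) := by
  classical
  haveI : IsClosed ((LinearMap.range (T : X →ₗ[ℂ] X) : Submodule ℂ X) : Set X) := hN
  set N : Submodule ℂ X := LinearMap.range (T : X →ₗ[ℂ] X) with hNdef
  set m := Module.finrank ℂ (X ⧸ N) with hm
  let b : Module.Basis (Fin m) ℂ (X ⧸ N) := Module.finBasis ℂ _
  set f : Fin m → (X →L[ℂ] ℂ) :=
    fun i => (LinearMap.toContinuousLinearMap (b.coord i)).comp (mkQL N) with hfdef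
  have hfapp : ∀ i x, f i x = b.coord i (Submodule.Quotient.mk x) := by
    intro i x
    simp [hfdef]
  refine ⟨f, ?_, ?_⟩
  · intro i h
    obtain ⟨x, hx⟩ := Submodule.mkQ_surjective N (b i)
    have : f i x = 0 := by rw [h]; rfl
    rw [hfapp] at this
    have hx' : (Submodule.Quotient.mk x : X ⧸ N) = b i := hx
    rw [hx'] at this
    simp [Module.Basis.coord_apply] at this
  · ext a
    constructor
    · intro ha
      have hker : N ≤ LinearMap.ker (a : X →ₗ[ℂ] X) := by
        rintro _ ⟨x, rfl⟩
        have := congrArg (fun s : X →L[ℂ] X => s x) ha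
        simpa using this
      set abar := N.liftQ (a : X →ₗ[ℂ] X) hker with habar
      refine ⟨fun i => (f i).smulRight (abar (b i)), fun i => ⟨abar (b i), rfl⟩, ?_⟩
      ext x
      rw [ContinuousLinearMap.sum_apply]
      simp only [ContinuousLinearMap.smulRight_apply, hfapp, Module.Basis.coord_apply]
      have h1 : a x = abar (Submodule.Quotient.mk x) := (Submodule.liftQ_apply _ _ _).symm
      conv_lhs => rw [h1, ← b.sum_repr (Submodule.Quotient.mk x)]
      rw [map_sum]
      simp [map_smul]
    · rintro ⟨g, hg, rfl⟩
      show (∑ i, g i) * T = 0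
      ext x
      rw [ContinuousLinearMap.zero_apply, ContinuousLinearMap.mul_apply,
        ContinuousLinearMap.sum_apply]
      apply Finset.sum_eq_zero
      intro i _
      obtain ⟨y, hy⟩ := hg i
      rw [hy]
      simp only [ContinuousLinearMap.smulRight_apply, hfapp]
      have : (Submodule.Quotient.mk (T x) : X ⧸ N) = 0 :=
        (Submodule.Quotient.mk_eq_zero _).2 ⟨x, rfl⟩
      rw [this]
      simp

lemma defect_eq (T : X →L[ℂ] X)
    (hN : IsClosed ((LinearMap.range (T : X →ₗ[ℂ] X) : Submodule ℂ X) : Set X)) :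
    defect T = Cardinal.toENat (Module.rank ℂ (X ⧸ LinearMap.range (T : X →ₗ[ℂ] X))) := by
  classical
  have key : ∀ n ∈ {n : ℕ∞ | ∃ k : ℕ, n = (k : ℕ∞) ∧ ∃ I : Fin k → Set (X →L[ℂ] X),
      (∀ i, IsMinimalLeftIdeal (I i)) ∧ {a : X →L[ℂ] X | a * T = 0} = idealSum I},
      ∃ k : ℕ, n = (k : ℕ∞) ∧ Module.rank ℂ (X ⧸ LinearMap.range (T : X →ₗ[ℂ] X)) ≤ k := by
    rintro n ⟨k, rfl, I, hmin, hsum⟩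
    choose f hf0 hI using fun i => minimalLeftIdeal_classify (hmin i)
    have hsum' : {a : X →L[ℂ] X | a * T = 0} = idealSum fun i => Kf (f i) := by
      rw [hsum, funext hI]
    exact ⟨k, rfl, defect_key T hN hf0 hsum'⟩
  show leftOrder _ = _
  unfold leftOrder
  apply le_antisymm
  · by_cases hfin : FiniteDimensional ℂ (X ⧸ LinearMap.range (T : X →ₗ[ℂ] X))
    · obtain ⟨f, hf0, hsum⟩ := exists_decomp_defect T hN
      have hmem : ((Module.finrank ℂ (X ⧸ LinearMap.range (T : X →ₗ[ℂ] X)) : ℕ) : ℕ∞) ∈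
          {n : ℕ∞ | ∃ k : ℕ, n = (k : ℕ∞) ∧ ∃ I : Fin k → Set (X →L[ℂ] X),
            (∀ i, IsMinimalLeftIdeal (I i)) ∧ {a : X →L[ℂ] X | a * T = 0} = idealSum I} :=
        ⟨_, rfl, fun i => Kf (f i), fun i => Kf_minimal (hf0 i), hsum⟩
      have h2 : Cardinal.toENat (Module.rank ℂ (X ⧸ LinearMap.range (T : X →ₗ[ℂ] X))) =
          ((Module.finrank ℂ (X ⧸ LinearMap.range (T : X →ₗ[ℂ] X)) : ℕ) : ℕ∞) := by
        rw [← Module.finrank_eq_rank ℂ, Cardinal.toENat_nat]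
      rw [h2]
      exact sInf_le hmem
    · have htop : Cardinal.aleph0 ≤ Module.rank ℂ (X ⧸ LinearMap.range (T : X →ₗ[ℂ] X)) := by
        by_contra h
        push_neg at h
        obtain ⟨m, hm⟩ := Cardinal.lt_aleph0.1 h
        exact hfin (Module.finite_of_rank_eq_nat hm)
      have hempty : {n : ℕ∞ | ∃ k : ℕ, n = (k : ℕ∞) ∧ ∃ I : Fin k → Set (X →L[ℂ] X),
          (∀ i, IsMinimalLeftIdeal (I i)) ∧ {a : X →L[ℂ] X | a * T = 0} = idealSum I} = ∅ := by
        rw [Set.eq_empty_iff_forall_notMem]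
        intro n hn
        obtain ⟨k, _, hrk⟩ := key n hn
        exact absurd (htop.trans hrk) (Cardinal.nat_lt_aleph0 k).not_ge
      rw [hempty, sInf_empty, Cardinal.toENat_eq_top.2 htop]
  · apply le_sInf
    intro n hn
    obtain ⟨k, rfl, hrank⟩ := key n hn
    exact_mod_cast Cardinal.toENat_le_nat.2 hrank

end StatementZeroAux
namespace StatementZeroAux

open Paper

variable {X : Type*} [NormedAddCommGroup X] [NormedSpace ℂ X] [CompleteSpace X]

lemma isClosed_of_le_of_quotient_fd {N P : Submodule ℂ X} (hN : IsClosed (N : Set X))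
    (hle : N ≤ P) (hfd : FiniteDimensional ℂ (X ⧸ N)) : IsClosed (P : Set X) := by
  haveI := hN
  haveI := hfd
  have h1 : Submodule.comap N.mkQ (Submodule.map N.mkQ P) = P := by
    rw [Submodule.comap_map_mkQ, sup_eq_right.2 hle]
  have h2 : (P : Set X) =
      (mkQL N) ⁻¹' ((Submodule.map N.mkQ P : Submodule ℂ (X ⧸ N)) : Set (X ⧸ N)) := by
    conv_lhs => rw [← h1]
    exact Submodule.comap_coe N.mkQ _
  rw [h2]
  exact (Submodule.closed_of_finiteDimensional _).preimage (mkQL N).continuous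

lemma isClosed_sup_fd {N W : Submodule ℂ X} (hN : IsClosed (N : Set X))
    (hW : FiniteDimensional ℂ W) : IsClosed ((N ⊔ W : Submodule ℂ X) : Set X) := by
  haveI := hN
  haveI := hW
  have h1 : Submodule.comap N.mkQ (Submodule.map N.mkQ W) = N ⊔ W := Submodule.comap_map_mkQ N W
  have h2 : ((N ⊔ W : Submodule ℂ X) : Set X) =
      (mkQL N) ⁻¹' ((Submodule.map N.mkQ W : Submodule ℂ (X ⧸ N)) : Set (X ⧸ N)) := by
    conv_lhs => rw [← h1]
    exact Submodule.comap_coe N.mkQ _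
  rw [h2]
  exact (Submodule.closed_of_finiteDimensional _).preimage (mkQL N).continuous

lemma quot_ker_fd (F : X →L[ℂ] X) (h : Module.Finite ℂ (LinearMap.range (F : X →ₗ[ℂ] X))) :
    FiniteDimensional ℂ (X ⧸ LinearMap.ker (F : X →ₗ[ℂ] X)) := by
  haveI : Module.Finite ℂ (LinearMap.range (F : X →ₗ[ℂ] X)) := h
  exact Module.Finite.equiv (LinearMap.quotKerEquivRange (F : X →ₗ[ℂ] X)).symm

lemma isClosed_range_of_rightFredholm (T S : X →L[ℂ] X)
    (hF : Module.Finite ℂ (LinearMap.range ((T * S - 1 : X →L[ℂ] X) : X →ₗ[ℂ] X))) :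
    IsClosed ((LinearMap.range (T : X →ₗ[ℂ] X) : Submodule ℂ X) : Set X) := by
  set F := T * S - 1 with hFdef
  have hkerF_le : LinearMap.ker (F : X →ₗ[ℂ] X) ≤ LinearMap.range (T : X →ₗ[ℂ] X) := by
    intro x hx
    have hFx : F x = 0 := hx
    rw [hFdef] at hFx
    have h2 : T (S x) = x := by simpa [sub_eq_zero] using hFx
    exact ⟨S x, h2⟩
  exact isClosed_of_le_of_quotient_fd (ContinuousLinearMap.isClosed_ker F) hkerF_le (quot_ker_fd F hF)

end StatementZeroAux
namespace StatementZeroAux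

open Paper

variable {X : Type*} [NormedAddCommGroup X] [NormedSpace ℂ X] [CompleteSpace X]

lemma isClosed_range_of_leftFredholm (T S : X →L[ℂ] X)
    (hF : Module.Finite ℂ (LinearMap.range ((S * T - 1 : X →L[ℂ] X) : X →ₗ[ℂ] X))) :
    IsClosed ((LinearMap.range (T : X →ₗ[ℂ] X) : Submodule ℂ X) : Set X) := by
  classical
  set F : X →L[ℂ] X := S * T - 1 with hFdef
  set u : X →L[ℂ] X := S * T with hudef
  have hux : ∀ x, u x = x + F x := by
    intro x
    simp [hudef, hFdef]
  -- the range of `u` is closed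
  have hker_le : LinearMap.ker (F : X →ₗ[ℂ] X) ≤ LinearMap.range (u : X →ₗ[ℂ] X) := by
    intro x hx
    have hFx : F x = 0 := hx
    exact ⟨x, by show u x = x; rw [hux x, hFx, add_zero]⟩
  have hclosedu : IsClosed ((LinearMap.range (u : X →ₗ[ℂ] X) : Submodule ℂ X) : Set X) :=
    isClosed_of_le_of_quotient_fd (ContinuousLinearMap.isClosed_ker F) hker_le (quot_ker_fd F hF)
  -- the kernel of `u` is finite dimensional
  haveI hfR : Module.Finite ℂ (LinearMap.range (F : X →ₗ[ℂ] X)) := hF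
  haveI hkeru_fd : FiniteDimensional ℂ (LinearMap.ker (u : X →ₗ[ℂ] X)) := by
    have hsub : LinearMap.ker (u : X →ₗ[ℂ] X) ≤ LinearMap.range (F : X →ₗ[ℂ] X) := by
      intro x hx
      have hux0 : u x = 0 := hx
      refine ⟨-x, ?_⟩
      have : x + F x = 0 := by rw [← hux x, hux0]
      have hxF : F x = -x := by
        rw [add_comm] at this
        exact eq_neg_of_add_eq_zero_left this
      show F (-x) = x
      rw [map_neg, hxF, neg_neg]
    exact Submodule.finiteDimensional_of_le hsub
  -- a closed complement `M` of `ker u`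
  obtain ⟨M, hMclosed, hcompl⟩ :=
    (Submodule.ClosedComplemented.of_finiteDimensional (LinearMap.ker (u : X →ₗ[ℂ] X))).exists_isClosed_isCompl
  haveI : CompleteSpace M := hMclosed.completeSpace_coe
  -- `u` restricted to `M`
  set u' : M →L[ℂ] X := u.comp M.subtypeL with hu'
  have hrangeu' : LinearMap.range (u' : M →ₗ[ℂ] X) = LinearMap.range (u : X →ₗ[ℂ] X) := by
    apply le_antisymm
    · rintro _ ⟨m, rfl⟩
      exact ⟨m, rfl⟩
    · rintro _ ⟨x, rfl⟩
      have hx : x ∈ LinearMap.ker (u : X →ₗ[ℂ] X) ⊔ M := by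
        rw [hcompl.sup_eq_top]; trivial
      obtain ⟨y, hy, z, hz, rfl⟩ := Submodule.mem_sup.1 hx
      refine ⟨⟨z, hz⟩, ?_⟩
      have : u y = 0 := hy
      show u z = u (y + z)
      rw [map_add, this, zero_add]
  have hkeru' : LinearMap.ker (u' : M →ₗ[ℂ] X) = ⊥ := by
    rw [Submodule.eq_bot_iff]
    rintro ⟨m, hm⟩ h
    have h1 : u m = 0 := h
    have h2 : m ∈ LinearMap.ker (u : X →ₗ[ℂ] X) ⊓ M := ⟨h1, hm⟩
    rw [hcompl.inf_eq_bot] at h2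
    exact Subtype.ext h2
  -- bijection onto the (closed) range
  have hclosedru' : IsClosed ((LinearMap.range (u' : M →ₗ[ℂ] X) : Submodule ℂ X) : Set X) := by
    rw [hrangeu']; exact hclosedu
  haveI : CompleteSpace (LinearMap.range (u' : M →ₗ[ℂ] X)) := hclosedru'.completeSpace_coe
  set u'' : M →L[ℂ] (LinearMap.range (u' : M →ₗ[ℂ] X)) :=
    u'.codRestrict (LinearMap.range (u' : M →ₗ[ℂ] X)) (fun m => LinearMap.mem_range_self _ m) with hu''
  have hker'' : LinearMap.ker (u'' : M →ₗ[ℂ] (LinearMap.range (u' : M →ₗ[ℂ] X))) = ⊥ := by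
    rw [ContinuousLinearMap.ker_codRestrict]
    exact hkeru'
  have hrange'' : LinearMap.range (u'' : M →ₗ[ℂ] (LinearMap.range (u' : M →ₗ[ℂ] X))) = ⊤ := by
    rw [Submodule.eq_top_iff']
    rintro ⟨_, m, rfl⟩
    exact ⟨m, rfl⟩
  set e := ContinuousLinearEquiv.ofBijective u'' hker'' hrange'' with he
  -- `T` is bounded below on `M`
  set T' : M →L[ℂ] X := T.comp M.subtypeL with hT'
  have hbound : ∀ m : M, ‖m‖ ≤ (‖(e.symm : (LinearMap.range (u' : M →ₗ[ℂ] X)) →L[ℂ] M)‖ * ‖S‖) * ‖T' m‖ := by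
    intro m
    have h1 : ‖m‖ ≤ ‖(e.symm : (LinearMap.range (u' : M →ₗ[ℂ] X)) →L[ℂ] M)‖ * ‖e m‖ := by
      calc ‖m‖ = ‖e.symm (e m)‖ := by rw [e.symm_apply_apply]
        _ ≤ _ := (e.symm : (LinearMap.range (u' : M →ₗ[ℂ] X)) →L[ℂ] M).le_opNorm _
    have h2 : ‖e m‖ = ‖u' m‖ := rfl
    have h3 : ‖u' m‖ ≤ ‖S‖ * ‖T' m‖ := by
      have : u' m = S (T' m) := by
        show u (m : X) = S (T (m : X))
        simp [hudef]
      rw [this]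
      exact S.le_opNorm _
    calc ‖m‖ ≤ ‖(e.symm : (LinearMap.range (u' : M →ₗ[ℂ] X)) →L[ℂ] M)‖ * ‖e m‖ := h1
      _ = ‖(e.symm : (LinearMap.range (u' : M →ₗ[ℂ] X)) →L[ℂ] M)‖ * ‖u' m‖ := by rw [h2]
      _ ≤ ‖(e.symm : (LinearMap.range (u' : M →ₗ[ℂ] X)) →L[ℂ] M)‖ * (‖S‖ * ‖T' m‖) := by
          exact mul_le_mul_of_nonneg_left h3 (norm_nonneg _)
      _ = (‖(e.symm : (LinearMap.range (u' : M →ₗ[ℂ] X)) →L[ℂ] M)‖ * ‖S‖) * ‖T' m‖ := by ring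
  have hanti : AntilipschitzWith (‖(e.symm : (LinearMap.range (u' : M →ₗ[ℂ] X)) →L[ℂ] M)‖₊ * ‖S‖₊) T' :=
    T'.antilipschitz_of_bound (fun m => by exact_mod_cast hbound m)
  have hclosedTM : IsClosed (Set.range T') := hanti.isClosed_range T'.uniformContinuous
  -- conclude
  have hrangeT' : (Submodule.map (T : X →ₗ[ℂ] X) M : Set X) = Set.range T' := by
    ext w
    constructor
    · rintro ⟨x, hx, rfl⟩
      exact ⟨⟨x, hx⟩, rfl⟩
    · rintro ⟨m, rfl⟩
      exact ⟨(m : X), m.2, rfl⟩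
  have hdecomp : LinearMap.range (T : X →ₗ[ℂ] X) = Submodule.map (T : X →ₗ[ℂ] X) M ⊔ Submodule.map (T : X →ₗ[ℂ] X) (LinearMap.ker (u : X →ₗ[ℂ] X)) := by
    conv_lhs => rw [← Submodule.map_top (f := (T : X →ₗ[ℂ] X)), ← hcompl.sup_eq_top]
    rw [Submodule.map_sup, sup_comm]
  haveI : Module.Finite ℂ (Submodule.map (T : X →ₗ[ℂ] X) (LinearMap.ker (u : X →ₗ[ℂ] X))) :=
    Module.Finite.map _ _
  have hfd : FiniteDimensional ℂ (Submodule.map (T : X →ₗ[ℂ] X) (LinearMap.ker (u : X →ₗ[ℂ] X))) := by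
    have : Submodule.map (T : X →ₗ[ℂ] X) (LinearMap.ker (u : X →ₗ[ℂ] X)) = Submodule.map (T : X →ₗ[ℂ] X) (LinearMap.ker (u : X →ₗ[ℂ] X)) :=
      rfl
    rw [this]
    infer_instance
  rw [hdecomp]
  exact isClosed_sup_fd (hrangeT' ▸ hclosedTM) hfd

end StatementZeroAux

open Paper in
/-- for a left or right Fredholm operator `T` on a complex Banach space `X`,
the nullity and defect of `T` computed as an element of the Banach algebra `B(X)` agree with
`dim ker T` and `dim X/ran T`. -/
theorem statement_0 {X : Type*} [NormedAddCommGroup X] [NormedSpace ℂ X] [CompleteSpace X]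
    (T : X →L[ℂ] X)
    (hT : (∃ S : X →L[ℂ] X, S * T - 1 ∈
            {F : X →L[ℂ] X | Module.Finite ℂ (LinearMap.range (F : X →ₗ[ℂ] X))}) ∨
          (∃ S : X →L[ℂ] X, T * S - 1 ∈
            {F : X →L[ℂ] X | Module.Finite ℂ (LinearMap.range (F : X →ₗ[ℂ] X))})) :
    nullity T = Cardinal.toENat (Module.rank ℂ (LinearMap.ker (T : X →ₗ[ℂ] X))) ∧
    defect T = Cardinal.toENat (Module.rank ℂ (X ⧸ LinearMap.range (T : X →ₗ[ℂ] X))) := by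
  have hclosed : IsClosed ((LinearMap.range (T : X →ₗ[ℂ] X) : Submodule ℂ X) : Set X) := by
    rcases hT with ⟨S, hS⟩ | ⟨S, hS⟩
    · exact StatementZeroAux.isClosed_range_of_leftFredholm T S hS
    · exact StatementZeroAux.isClosed_range_of_rightFredholm T S hS
  exact ⟨StatementZeroAux.nullity_eq T, StatementZeroAux.defect_eq T hclosed⟩
end
end

section
/- Let 𝒜 be an algebra with a unit. If a ∈ 𝒜 is Drazin invertible and b ∈ 𝒜 is a nilpotent element commuting with a, then a + b is Drazin invertible. -/
open Filter Topology Set Metric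

noncomputable section

lemma drazin_comm {A : Type*} [Ring A] {a d x : A} (hd1 : d * a * d = d)
    (hd2 : a * d = d * a) {k : ℕ} (hd3 : a ^ k * d * a = a ^ k)
    (hx : a * x = x * a) : d * x = x * d := by
  have had : Commute a d := hd2
  have hcax : Commute a x := hx
  have h2a : d * d * a = d := by rw [mul_assoc, ← hd2, ← mul_assoc, hd1]
  have ha2 : a * d * d = d := by rw [hd2, hd1]
  have hak : a ^ (k + 1) * d = a ^ k := by
    rw [pow_succ, mul_assoc, hd2, ← mul_assoc, hd3]
  have hak' : d * a ^ (k + 1) = a ^ k := by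
    rw [← (had.pow_left (k + 1)).eq, hak]
  have L1 : ∀ n, d * x = d ^ (n + 1) * x * a ^ n := by
    intro n
    induction n with
    | zero => simp
    | succ n ih =>
      rw [ih]
      have h1 : d ^ (n + 1) = d ^ (n + 2) * a := by
        calc d ^ (n + 1) = d ^ n * d := pow_succ _ _
          _ = d ^ n * (d * d * a) := by rw [h2a]
          _ = d ^ n * d * d * a := by simp [mul_assoc]
          _ = d ^ (n + 2) * a := by rw [← pow_succ, ← pow_succ]
      calc d ^ (n + 1) * x * a ^ n = d ^ (n + 2) * a * x * a ^ n := by rw [h1]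
        _ = d ^ (n + 2) * (a * x) * a ^ n := by rw [mul_assoc (d ^ (n + 2))]
        _ = d ^ (n + 2) * (x * a) * a ^ n := by rw [hx]
        _ = d ^ (n + 2) * x * (a * a ^ n) := by simp [mul_assoc]
        _ = d ^ (n + 2) * x * a ^ (n + 1) := by rw [← pow_succ']
  have L2 : ∀ n, x * d = x * a ^ n * d ^ (n + 1) := by
    intro n
    induction n with
    | zero => simp
    | succ n ih =>
      rw [ih]
      have h1 : d ^ (n + 1) = a * d ^ (n + 2) := by
        calc d ^ (n + 1) = d * d ^ n := pow_succ' _ _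
          _ = a * d * d * d ^ n := by rw [ha2]
          _ = a * (d * (d * d ^ n)) := by simp [mul_assoc]
          _ = a * (d * d ^ (n + 1)) := by rw [← pow_succ']
          _ = a * d ^ (n + 2) := by rw [← pow_succ']
      calc x * a ^ n * d ^ (n + 1) = x * a ^ n * (a * d ^ (n + 2)) := by rw [h1]
        _ = x * (a ^ n * a) * d ^ (n + 2) := by simp [mul_assoc]
        _ = x * a ^ (n + 1) * d ^ (n + 2) := by rw [← pow_succ]
  have he : (d * a) * (d * a) = d * a := by rw [← mul_assoc, hd1]
  have hpow : d ^ (k + 1) * a ^ (k + 1) = d * a := by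
    rw [← (had.symm.mul_pow (k + 1))]
    exact IsIdempotentElem.pow_succ_eq k he
  have hpow' : a ^ (k + 1) * d ^ (k + 1) = d * a := by
    rw [← (had.mul_pow (k + 1)), hd2]
    exact IsIdempotentElem.pow_succ_eq k he
  have hk : x * a ^ k = a ^ k * x := ((hcax.pow_left k).eq).symm
  have hk1 : x * a ^ (k + 1) = a ^ (k + 1) * x := ((hcax.pow_left (k + 1)).eq).symm
  have e1 : x * d = d * x * (a * d) := by
    calc x * d = x * a ^ k * d ^ (k + 1) := L2 k
      _ = a ^ k * x * d ^ (k + 1) := by rw [hk]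
      _ = d * a ^ (k + 1) * x * d ^ (k + 1) := by rw [hak']
      _ = d * (a ^ (k + 1) * x) * d ^ (k + 1) := by rw [mul_assoc d]
      _ = d * (x * a ^ (k + 1)) * d ^ (k + 1) := by rw [← hk1]
      _ = d * x * (a ^ (k + 1) * d ^ (k + 1)) := by simp [mul_assoc]
      _ = d * x * (d * a) := by rw [hpow']
      _ = d * x * (a * d) := by rw [hd2]
  have e2 : d * x = a * d * (x * d) := by
    calc d * x = d ^ (k + 1) * x * a ^ k := L1 k
      _ = d ^ (k + 1) * x * (a ^ (k + 1) * d) := by rw [hak]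
      _ = d ^ (k + 1) * (x * a ^ (k + 1)) * d := by simp [mul_assoc]
      _ = d ^ (k + 1) * (a ^ (k + 1) * x) * d := by rw [hk1]
      _ = d ^ (k + 1) * a ^ (k + 1) * (x * d) := by simp [mul_assoc]
      _ = d * a * (x * d) := by rw [hpow]
      _ = a * d * (x * d) := by rw [hd2]
  have : x * d = d * x := by
    calc x * d = d * x * (a * d) := e1
      _ = d * (x * a) * d := by simp [mul_assoc]
      _ = d * (a * x) * d := by rw [← hx]
      _ = d * a * (x * d) := by simp [mul_assoc]
      _ = a * d * (x * d) := by rw [← hd2]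
      _ = d * x := e2.symm
  exact this.symm


open Paper in
/-- if `a` is Drazin invertible and `b` is nilpotent commuting with `a`, then
`a + b` is Drazin invertible. -/
theorem statement_14 {A : Type*} [Ring A] [Algebra ℂ A] (a b : A)
    (ha : IsDrazinInvertible a) (hb : IsNilpotent b) (hab : a * b = b * a) :
    IsDrazinInvertible (a + b) := by
  obtain ⟨d, k, hd1, hd2, hd3⟩ := ha
  refine ?_
  obtain ⟨m, hm⟩ := hb
  have hdb : d * b = b * d := drazin_comm hd1 hd2 hd3 hab
  have had : Commute a d := hd2
  have hbd : Commute b d := hdb.symm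
  have hcab : Commute a b := hab
  have ha2 : a * d * d = d := by rw [hd2, hd1]
  have hak : a ^ (k + 1) * d = a ^ k := by
    rw [pow_succ, mul_assoc, hd2, ← mul_assoc, hd3]
  set s := b * d with hs_def
  have hsm : s ^ m = 0 := by
    rw [hs_def, hbd.mul_pow, hm, zero_mul]
  obtain ⟨u, hu⟩ := IsNilpotent.isUnit_one_add (⟨m, hsm⟩ : IsNilpotent s)
  set v := ((u⁻¹ : Aˣ) : A) with hv_def
  have cas : Commute a s := hcab.mul_right had
  have cbs : Commute b s := (Commute.refl b).mul_right hbd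
  have cds : Commute d s := hbd.symm.mul_right (Commute.refl d)
  have cav : Commute a v := by
    have : Commute a ↑u := by rw [hu]; exact (Commute.one_right a).add_right cas
    exact this.units_inv_right
  have cbv : Commute b v := by
    have : Commute b ↑u := by rw [hu]; exact (Commute.one_right b).add_right cbs
    exact this.units_inv_right
  set e := a * d with he_def
  have hee : e * e = e := by
    rw [he_def, mul_assoc, ← mul_assoc d a d, hd1]
  have hed : e * d = d := ha2
  have hes : e * s = s := by
    calc a * d * (b * d) = a * (d * b) * d := by simp [mul_assoc]
      _ = a * (b * d) * d := by rw [hdb]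
      _ = a * b * (d * d) := by simp [mul_assoc]
      _ = b * a * (d * d) := by rw [hab]
      _ = b * (a * d * d) := by simp [mul_assoc]
      _ = b * d := by rw [ha2]
  set w := d * v with hw_def
  have husv : (1 + s) * v = 1 := by rw [hv_def, ← hu]; exact u.mul_inv
  have h_abw : (a + b) * w = e := by
    calc (a + b) * (d * v) = (a * d + b * d) * v := by rw [← mul_assoc, add_mul]
      _ = (e + s) * v := by rw [← he_def, ← hs_def]
      _ = (e * (1 + s)) * v := by rw [mul_add, mul_one, hes]
      _ = e * ((1 + s) * v) := by rw [mul_assoc]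
      _ = e := by rw [husv, mul_one]
  have cabw : Commute (a + b) w :=
    (had.add_left hbd).mul_right (cav.add_left cbv)
  have h_wab : w * (a + b) = e := by rw [← cabw.eq, h_abw]
  -- nilpotent part
  set f := (1 : A) - e with hf_def
  have hff : f * f = f := by
    simp only [hf_def, mul_sub, sub_mul, mul_one, one_mul, hee]
    abel
  have cae : Commute a e := (Commute.refl a).mul_right had
  have cbe : Commute b e := hcab.symm.mul_right hbd
  have caf : Commute a f := (Commute.one_right a).sub_right cae
  have cbf : Commute b f := (Commute.one_right b).sub_right cbe
  have hfa_nil : (f * a) ^ (k + 1) = 0 := by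
    have h1 : a ^ (k + 1) * e = a ^ (k + 1) := by
      calc a ^ (k + 1) * (a * d) = a ^ (k + 2) * d := by rw [← mul_assoc, ← pow_succ]
        _ = a * (a ^ (k + 1) * d) := by rw [pow_succ', mul_assoc]
        _ = a * a ^ k := by rw [hak]
        _ = a ^ (k + 1) := (pow_succ' a k).symm
    have h2 : a ^ (k + 1) * f = 0 := by
      rw [hf_def, mul_sub, mul_one, h1, sub_self]
    calc (f * a) ^ (k + 1) = f ^ (k + 1) * a ^ (k + 1) := caf.symm.mul_pow (k + 1)
      _ = f * a ^ (k + 1) := by rw [IsIdempotentElem.pow_succ_eq k hff]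
      _ = a ^ (k + 1) * f := (caf.symm.pow_right (k + 1)).eq
      _ = 0 := h2
  have hfb_nil : (f * b) ^ (m + 1) = 0 := by
    calc (f * b) ^ (m + 1) = f ^ (m + 1) * b ^ (m + 1) := cbf.symm.mul_pow (m + 1)
      _ = f ^ (m + 1) * (b ^ m * b) := by rw [pow_succ b]
      _ = 0 := by rw [hm, zero_mul, mul_zero]
  have cfafb : Commute (f * a) (f * b) := by
    have c1 : Commute (f * a) f := Commute.mul_left (Commute.refl f) caf
    have c2 : Commute (f * a) b := Commute.mul_left cbf.symm hcab
    exact c1.mul_right c2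
  have hnilsum : IsNilpotent (f * (a + b)) := by
    rw [mul_add]
    exact Commute.isNilpotent_add cfafb ⟨k + 1, hfa_nil⟩ ⟨m + 1, hfb_nil⟩
  obtain ⟨N, hN⟩ := hnilsum
  have cabf : Commute (a + b) f := caf.add_left cbf
  refine ⟨w, N + 1, ?_, ?_, ?_⟩
  · rw [h_wab, hw_def, ← mul_assoc, hed]
  · exact cabw.eq
  · have hpf : (a + b) ^ (N + 1) * f = 0 := by
      calc (a + b) ^ (N + 1) * f = (a + b) ^ (N + 1) * f ^ (N + 1) := by
            rw [IsIdempotentElem.pow_succ_eq N hff]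
        _ = ((a + b) * f) ^ (N + 1) := (cabf.mul_pow (N + 1)).symm
        _ = (f * (a + b)) ^ (N + 1) := by rw [cabf.eq]
        _ = (f * (a + b)) ^ N * (f * (a + b)) := pow_succ _ _
        _ = 0 := by rw [hN, zero_mul]
    calc (a + b) ^ (N + 1) * w * (a + b)
        = (a + b) ^ (N + 1) * (w * (a + b)) := by rw [mul_assoc]
      _ = (a + b) ^ (N + 1) * e := by rw [h_wab]
      _ = (a + b) ^ (N + 1) * (1 - f) := by rw [hf_def, sub_sub_cancel]
      _ = (a + b) ^ (N + 1) - (a + b) ^ (N + 1) * f := by rw [mul_sub, mul_one]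
      _ = (a + b) ^ (N + 1) := by rw [hpf, sub_zero]
end
end
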